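/- arXiv:cs/0701097 — 2 statements merged into one kernel-verified Lean document; each statement's English description precedes it below -/
import Mathlib

section
/- For all integers 0 ≤ ν ≤ l and every integer m, the ν-th partial q-derivative with respect to x of the polynomial a_l(x,y) = Σ_{u=0}^{l} [l,u]_q α(m,u) y^u x^{l−u} equals β(l,ν) · Σ_{u=0}^{l−ν} [l−ν,u]_q α(m,u) y^u x^{l−ν−u}, and the ν-th partial q-derivative with respect to x of b_l(x,y) = Σ_{u=0}^{l} [l,u]_q (−1)^u q^{σ_u} y^u x^{l−u} equals β(l,ν) · Σ_{u=0}^{l−ν} [l−ν,u]_q (−1)^u q^{σ_u} y^u x^{l−ν−u}. -/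
open Finset

/-- `α(m,u) = ∏_{i=0}^{u-1} (q^m - q^i)`, with `q^m` the real power (integer exponent `m`). -/
noncomputable def alphaR (q : ℝ) (m : ℤ) (u : ℕ) : ℝ :=
  ∏ i ∈ Finset.range u, (q ^ m - q ^ (i : ℤ))

/-- Gaussian binomial `[n,u]_q = α(n,u)/α(u,u)` (which is `0` when `u > n`). -/
noncomputable def gaussR (q : ℝ) (n u : ℕ) : ℝ :=
  alphaR q n u / alphaR q u u

/-- `β(l,0) = 1` and `β(l,ν) = ∏_{i=0}^{ν-1} (q^{l-i} - 1)/(q - 1)`. -/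
noncomputable def betaR (q : ℝ) (l ν : ℕ) : ℝ :=
  ∏ i ∈ Finset.range ν, (q ^ (l - i) - 1) / (q - 1)

/-- The partial `q`-derivative with respect to `x` (for `x ≠ 0`):
`f^{(1)}(x,y) = (f(qx,y) - f(x,y)) / ((q-1)x)`. -/
noncomputable def qDeriv (q : ℝ) (f : ℝ → ℝ → ℝ) : ℝ → ℝ → ℝ :=
  fun x y => (f (q * x) y - f x y) / ((q - 1) * x)

lemma alpha_nat (q : ℝ) (n u : ℕ) : alphaR q n u = ∏ i ∈ range u, (q ^ n - q ^ i) := by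
  simp [alphaR, zpow_natCast]

lemma key (q : ℝ) (hq0 : q ≠ 0) (n u : ℕ) (hu : u < n) :
    alphaR q n u * (q ^ (n - u) - 1) = (q ^ n - 1) * alphaR q (↑(n - 1)) u := by
  obtain ⟨d, rfl⟩ : ∃ d, n = u + d + 1 := ⟨n - u - 1, by omega⟩
  rw [alpha_nat, alpha_nat, show u + d + 1 - u = d + 1 from by omega,
    show u + d + 1 - 1 = u + d from by omega]
  apply mul_right_cancel₀ (pow_ne_zero u hq0)
  have hL : (∏ i ∈ range u, (q ^ (u + d + 1) - q ^ i)) * (q ^ (d + 1) - 1) * q ^ u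
      = ∏ i ∈ range (u + 1), (q ^ (u + d + 1) - q ^ i) := by
    rw [prod_range_succ]; ring
  have hR : (q ^ (u + d + 1) - 1) * (∏ i ∈ range u, (q ^ (u + d) - q ^ i)) * q ^ u
      = ∏ i ∈ range (u + 1), (q ^ (u + d + 1) - q ^ i) := by
    rw [prod_range_succ']
    have h : ∀ i ∈ range u, q ^ (u + d + 1) - q ^ (i + 1) = q * (q ^ (u + d) - q ^ i) :=
      fun i _ => by ring
    rw [prod_congr rfl h, prod_mul_distrib, prod_const, Finset.card_range]
    ring
  rw [hL, hR]

lemma gauss_key (q : ℝ) (hq0 : q ≠ 0) (n u : ℕ) (hu : u < n) :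
    gaussR q n u * (q ^ (n - u) - 1) = (q ^ n - 1) * gaussR q (n - 1) u := by
  unfold gaussR
  rw [div_mul_eq_mul_div, key q hq0 n u hu, mul_div_assoc]

lemma step (q : ℝ) (hq : 1 < q) (c : ℕ → ℝ) (k : ℕ) (x y : ℝ) (hx : x ≠ 0) :
    ((∑ u ∈ range (k + 1 + 1), gaussR q (k + 1) u * c u * y ^ u * (q * x) ^ (k + 1 - u))
      - ∑ u ∈ range (k + 1 + 1), gaussR q (k + 1) u * c u * y ^ u * x ^ (k + 1 - u))
      / ((q - 1) * x)
    = ((q ^ (k + 1) - 1) / (q - 1)) *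
        ∑ u ∈ range (k + 1), gaussR q k u * c u * y ^ u * x ^ (k - u) := by
  have hq0 : q ≠ 0 := by positivity
  have hq1 : q - 1 ≠ 0 := sub_ne_zero.mpr hq.ne'
  rw [div_eq_iff (mul_ne_zero hq1 hx), ← Finset.sum_sub_distrib, Finset.sum_range_succ]
  simp only [Nat.sub_self, pow_zero, mul_one, sub_self, add_zero]
  have hC : ∀ S : ℝ, ((q ^ (k + 1) - 1) / (q - 1) * S) * ((q - 1) * x)
      = (q ^ (k + 1) - 1) * S * x := fun S => by
    field_simp
  rw [hC, Finset.mul_sum, Finset.sum_mul]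
  refine Finset.sum_congr rfl fun u hu => ?_
  have hu' : u < k + 1 := mem_range.mp hu
  have hk := gauss_key q hq0 (k + 1) u hu'
  rw [show k + 1 - 1 = k from rfl] at hk
  rw [show k + 1 - u = (k - u) + 1 from by omega] at hk ⊢
  linear_combination (c u * y ^ u * x ^ (k - u + 1)) * hk

lemma main_lemma (q : ℝ) (hq : 1 < q) (c : ℕ → ℝ) (l : ℕ) : ∀ ν ≤ l, ∀ x : ℝ, x ≠ 0 → ∀ y : ℝ,
    (qDeriv q)^[ν]
      (fun x' y' => ∑ u ∈ range (l + 1), gaussR q l u * c u * y' ^ u * x' ^ (l - u)) x y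
    = betaR q l ν * ∑ u ∈ range (l - ν + 1), gaussR q (l - ν) u * c u * y ^ u * x ^ (l - ν - u) := by
  have hq0 : q ≠ 0 := by positivity
  intro ν
  induction ν with
  | zero => intro _ x hx y; simp [betaR]
  | succ n ih =>
    intro hn x hx y
    have hnl : n ≤ l := by omega
    rw [Function.iterate_succ_apply']
    simp only [qDeriv]
    rw [ih hnl (q * x) (mul_ne_zero hq0 hx) y, ih hnl x hx y]
    obtain ⟨k, hk⟩ : ∃ k, l - n = k + 1 := ⟨l - n - 1, by omega⟩
    rw [hk, show l - (n + 1) = k from by omega, ← mul_sub, mul_div_assoc,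
      step q hq c k x y hx]
    have hb : betaR q l (n + 1) = betaR q l n * ((q ^ (k + 1) - 1) / (q - 1)) := by
      rw [betaR, betaR, prod_range_succ, hk]
    rw [hb]; ring

/-- for `0 ≤ ν ≤ l`, the `ν`-th partial `q`-derivative (w.r.t. `x`) of
`a_l(x,y) = Σ_{u=0}^l [l,u]_q α(m,u) y^u x^{l-u}` is
`β(l,ν) Σ_{u=0}^{l-ν} [l-ν,u]_q α(m,u) y^u x^{l-ν-u}`, and the `ν`-th partial
`q`-derivative of `b_l(x,y) = Σ_{u=0}^l [l,u]_q (-1)^u q^{σ_u} y^u x^{l-u}` is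
`β(l,ν) Σ_{u=0}^{l-ν} [l-ν,u]_q (-1)^u q^{σ_u} y^u x^{l-ν-u}`. -/
theorem qDeriv_special_polys (q : ℕ) (hq : 2 ≤ q) (m : ℤ) (l ν : ℕ) (hν : ν ≤ l)
    (x y : ℝ) (hx : x ≠ 0) :
    (qDeriv (q : ℝ))^[ν]
        (fun x' y' => ∑ u ∈ Finset.range (l + 1),
          gaussR (q : ℝ) l u * alphaR (q : ℝ) m u * y' ^ u * x' ^ (l - u)) x y =
      betaR (q : ℝ) l ν * ∑ u ∈ Finset.range (l - ν + 1),
        gaussR (q : ℝ) (l - ν) u * alphaR (q : ℝ) m u * y ^ u * x ^ (l - ν - u) ∧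
    (qDeriv (q : ℝ))^[ν]
        (fun x' y' => ∑ u ∈ Finset.range (l + 1),
          gaussR (q : ℝ) l u * (-1) ^ u * (q : ℝ) ^ (u * (u - 1) / 2) * y' ^ u * x' ^ (l - u)) x y =
      betaR (q : ℝ) l ν * ∑ u ∈ Finset.range (l - ν + 1),
        gaussR (q : ℝ) (l - ν) u * (-1) ^ u * (q : ℝ) ^ (u * (u - 1) / 2) * y ^ u *
          x ^ (l - ν - u) := by
  have hQ : (1 : ℝ) < (q : ℝ) := by exact_mod_cast (by omega : 1 < q)
  constructor
  · exact main_lemma (q : ℝ) hQ (fun u => alphaR (q : ℝ) m u) l ν hν x hx y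
  · have e : (fun x' y' => ∑ u ∈ Finset.range (l + 1),
        gaussR (q : ℝ) l u * (-1) ^ u * (q : ℝ) ^ (u * (u - 1) / 2) * y' ^ u * x' ^ (l - u))
        = (fun x' y' => ∑ u ∈ range (l + 1),
        gaussR (q : ℝ) l u * ((fun u => (-1 : ℝ) ^ u * (q : ℝ) ^ (u * (u - 1) / 2)) u)
          * y' ^ u * x' ^ (l - u)) := by
      funext a b; exact Finset.sum_congr rfl fun u _ => by ring
    rw [e]
    exact (main_lemma (q : ℝ) hQ (fun u => (-1 : ℝ) ^ u * (q : ℝ) ^ (u * (u - 1) / 2))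
      l ν hν x hx y).trans (by
        congr 1
        exact Finset.sum_congr rfl fun u _ => by ring)
end

section
/- (Leibniz rule for the q-product.) Let f(x,y) = Σ_{i=0}^r f_i(m) y^i x^{r−i} and g(x,y) = Σ_{j=0}^s g_j(m) y^j x^{s−j} be homogeneous polynomials of degrees r and s with parameter m. Then for every ν ≥ 1, the ν-th q-derivative with respect to x of the q-product f*g satisfies (f*g)^{(ν)} = Σ_{l=0}^{ν} [ν,l]_q · q^{(ν−l)(r−l)} · (f^{(l)}) * (g^{(ν−l)}), as an identity of homogeneous polynomials of degree r+s−ν with parameter m. -/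
open Finset

/-- A homogeneous polynomial in `x,y` with integer parameter `m` is modelled by its
family of coefficients `f m i` (the coefficient of `y^i x^{deg - i}`).
The `q`-product of `f` (degree `r`) and `g` (degree `s`) has coefficients
`c_u(m) = Σ_{i=0}^u q^{i·s} f_i(m) g_{u-i}(m-i)`. -/
noncomputable def qmulCoeff (q : ℝ) (s : ℕ) (f g : ℤ → ℕ → ℝ) : ℤ → ℕ → ℝ :=
  fun m u => ∑ i ∈ Finset.range (u + 1), q ^ (i * s) * f m i * g (m - i) (u - i)

/-- The `q`-derivative with respect to `x` of a degree-`r` homogeneous polynomial,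
at the level of coefficients: `(f^{(1)})_i(m) = f_i(m) · (q^{r-i} - 1)/(q - 1)`
(the coefficient of `y^i x^{r-1-i}`). -/
noncomputable def qderivCoeff (q : ℝ) (r : ℕ) (f : ℤ → ℕ → ℝ) : ℤ → ℕ → ℝ :=
  fun m i => f m i * ((q ^ (r - i) - 1) / (q - 1))

/-- The `ν`-th `q`-derivative with respect to `x` of a degree-`r` homogeneous polynomial. -/
noncomputable def qdIter (q : ℝ) : ℕ → ℕ → (ℤ → ℕ → ℝ) → (ℤ → ℕ → ℝ)
  | _, 0, f => f
  | r, ν + 1, f => qdIter q (r - 1) ν (qderivCoeff q r f)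

lemma qdIter_peel (q : ℝ) : ∀ (n R : ℕ) (f : ℤ → ℕ → ℝ),
    qdIter q R (n+1) f = qderivCoeff q (R - n) (qdIter q R n f) := by
  intro n
  induction n with
  | zero => intro R f; simp [qdIter]
  | succ n ih =>
    intro R f
    show qdIter q (R-1) (n+1) (qderivCoeff q R f) = _
    rw [ih]
    have h : R - 1 - n = R - (n+1) := by omega
    rw [h]
    rfl

lemma vanish_deriv (q : ℝ) (r : ℕ) (f : ℤ → ℕ → ℝ) (hf : ∀ m i, r < i → f m i = 0) :
    ∀ m i, r - 1 < i → qderivCoeff q r f m i = 0 := by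
  intro m i hi
  unfold qderivCoeff
  rcases lt_or_ge r i with h | h
  · rw [hf m i h]; ring
  · have : i = r := by omega
    subst this
    simp

lemma vanish_iter (q : ℝ) : ∀ (n R : ℕ) (f : ℤ → ℕ → ℝ),
    (∀ m i, R < i → f m i = 0) → ∀ m i, R - n < i → qdIter q R n f m i = 0 := by
  intro n
  induction n with
  | zero => intro R f hf m i hi; exact hf m i (by omega)
  | succ n ih =>
    intro R f hf m i hi
    show qdIter q (R-1) n (qderivCoeff q R f) m i = 0
    exact ih (R-1) _ (vanish_deriv q R f hf) m i (by omega)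

lemma iter_zero_of_lt (q : ℝ) (R : ℕ) (f : ℤ → ℕ → ℝ)
    (hf : ∀ m i, R < i → f m i = 0) {n : ℕ} (hn : R < n) :
    ∀ m i, qdIter q R n f m i = 0 := by
  intro m i
  obtain ⟨n, rfl⟩ : ∃ k, n = k + 1 := ⟨n - 1, by omega⟩
  rw [qdIter_peel]
  unfold qderivCoeff
  have hRn : R - n = 0 := by omega
  rw [hRn]
  rcases Nat.eq_zero_or_pos i with rfl | hi
  · simp
  · rw [vanish_iter q n R f hf m i (by omega)]; ring

lemma qmul_zero_left (q : ℝ) (s : ℕ) (f g : ℤ → ℕ → ℝ) (hf : ∀ m i, f m i = 0) (m : ℤ) (u : ℕ) :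
    qmulCoeff q s f g m u = 0 := by simp [qmulCoeff, hf]

lemma qmul_zero_right (q : ℝ) (s : ℕ) (f g : ℤ → ℕ → ℝ) (hg : ∀ m i, g m i = 0) (m : ℤ) (u : ℕ) :
    qmulCoeff q s f g m u = 0 := by simp [qmulCoeff, hg]

lemma alphaR_succ (q : ℝ) (m : ℤ) (l : ℕ) :
    alphaR q m (l+1) = alphaR q m l * (q ^ m - q ^ (l:ℤ)) := Finset.prod_range_succ _ _

lemma alphaR_shift (q : ℝ) (hq : 0 < q) (m : ℤ) (l : ℕ) :
    alphaR q (m+1) (l+1) = (q ^ (m+1) - 1) * q^l * alphaR q m l := by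
  unfold alphaR
  rw [Finset.prod_range_succ']
  have h1 : ∀ i ∈ Finset.range l, q ^ (m+1) - q^(((i+1:ℕ)) : ℤ) = q * (q^m - q^(i:ℤ)) := by
    intro i _
    push_cast
    rw [zpow_add₀ (ne_of_gt hq), zpow_add₀ (ne_of_gt hq), zpow_one]
    ring
  rw [Finset.prod_congr rfl h1, Finset.prod_mul_distrib, Finset.prod_const]
  simp
  ring

lemma alphaR_pos (q : ℝ) (hq : 1 < q) {n l : ℕ} (h : l ≤ n) : 0 < alphaR q n l := by
  apply Finset.prod_pos
  intro i hi
  rw [Finset.mem_range] at hi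
  have : (q:ℝ) ^ (i:ℤ) < q ^ (n:ℤ) := zpow_lt_zpow_right₀ hq (by exact_mod_cast (by omega : i < n))
  linarith

lemma gauss_zero (q : ℝ) (n : ℕ) : gaussR q n 0 = 1 := by
  simp [gaussR, alphaR]

lemma gauss_eq_zero_of_lt (q : ℝ) {n l : ℕ} (h : n < l) : gaussR q n l = 0 := by
  unfold gaussR alphaR
  rw [Finset.prod_eq_zero (Finset.mem_range.2 h) (by simp), zero_div]

lemma gauss_pascal (q : ℝ) (hq : 1 < q) (n l : ℕ) (h : l ≤ n) :
    gaussR q (n+1) (l+1) = gaussR q n (l+1) + q^(n-l) * gaussR q n l := by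
  have hq0 : (0:ℝ) < q := by linarith
  have e1 : alphaR q ((n+1:ℕ):ℤ) (l+1) = (q^(n+1) - 1) * q^l * alphaR q n l := by
    push_cast
    rw [alphaR_shift q hq0]
    norm_num [← zpow_natCast q (n+1)]
  have e2 : alphaR q ((l+1:ℕ):ℤ) (l+1) = (q^(l+1) - 1) * q^l * alphaR q l l := by
    push_cast
    rw [alphaR_shift q hq0]
    norm_num [← zpow_natCast q (l+1)]
  have e3 : alphaR q (n:ℤ) (l+1) = alphaR q n l * (q^n - q^l) := by
    rw [alphaR_succ, zpow_natCast, zpow_natCast]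
  unfold gaussR
  rw [e1, e2, e3]
  have hll : alphaR q l l ≠ 0 := ne_of_gt (alphaR_pos q hq le_rfl)
  have hpl : (q:ℝ)^l ≠ 0 := by positivity
  have hl1 : (q:ℝ)^(l+1) - 1 ≠ 0 := by
    have : (1:ℝ) < q^(l+1) := one_lt_pow₀ hq (by omega)
    linarith
  obtain ⟨k, rfl⟩ := Nat.exists_eq_add_of_le h
  have hnl : l + k - l = k := by omega
  rw [hnl]
  field_simp
  ring

lemma prodRule (q : ℝ) (hq : 1 < q) (r' s' : ℕ) (f' g' : ℤ → ℕ → ℝ)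
    (hf : ∀ m i, r' < i → f' m i = 0) (hg : ∀ m j, s' < j → g' m j = 0) (m : ℤ) (u : ℕ) :
    qmulCoeff q s' f' g' m u * ((q ^ ((r' + s') - u) - 1) / (q - 1))
      = q ^ r' * qmulCoeff q (s' - 1) f' (qderivCoeff q s' g') m u
        + qmulCoeff q s' (qderivCoeff q r' f') g' m u := by
  have hq1 : q - 1 ≠ 0 := by intro h; nlinarith
  unfold qmulCoeff qderivCoeff
  rw [Finset.sum_mul, Finset.mul_sum, ← Finset.sum_add_distrib]
  apply Finset.sum_congr rfl
  intro i hi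
  rw [Finset.mem_range] at hi
  by_cases hfi : f' m i = 0
  · rw [hfi]; ring
  by_cases hgi : g' (m - i) (u - i) = 0
  · rw [hgi]; ring
  have hir : i ≤ r' := by by_contra hc; exact hfi (hf m i (by omega))
  have hjs : u - i ≤ s' := by by_contra hc; exact hgi (hg _ _ (by omega))
  have hiu : i ≤ u := by omega
  set a := r' - i with ha
  set b := s' - (u - i) with hb
  have har : r' = i + a := by omega
  have hab : (r' + s') - u = a + b := by omega
  rw [hab, har]
  rcases Nat.eq_zero_or_pos s' with hs0 | hs1
  · have hb0 : b = 0 := by omega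
    have hju : u - i = 0 := by omega
    rw [hs0, hb0, hju]
    norm_num
    ring
  · obtain ⟨c, rfl⟩ : ∃ c, s' = c + 1 := ⟨s' - 1, by omega⟩
    have hsc : c + 1 - 1 = c := by omega
    rw [hsc]
    field_simp
    ring

theorem qLeibnizAux (q : ℝ) (hq : 1 < q) (r s : ℕ) (f g : ℤ → ℕ → ℝ)
    (hf : ∀ m i, r < i → f m i = 0) (hg : ∀ m j, s < j → g m j = 0) :
    ∀ (ν : ℕ) (m : ℤ) (u : ℕ),
    qdIter q (r + s) ν (qmulCoeff q s f g) m u =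
      ∑ l ∈ Finset.range (ν + 1),
        gaussR q ν l * q ^ ((ν - l) * (r - l)) *
          qmulCoeff q (s - (ν - l)) (qdIter q r l f) (qdIter q s (ν - l) g) m u := by
  intro ν
  induction ν with
  | zero => intro m u; simp [qdIter, gauss_zero]
  | succ ν IH =>
    intro m u
    rw [qdIter_peel]
    show qdIter q (r+s) ν (qmulCoeff q s f g) m u * ((q ^ (r + s - ν - u) - 1) / (q - 1)) = _
    rw [IH m u, Finset.sum_mul]
    have key : ∀ l ∈ Finset.range (ν+1),
        (gaussR q ν l * q ^ ((ν - l) * (r - l)) *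
          qmulCoeff q (s - (ν - l)) (qdIter q r l f) (qdIter q s (ν - l) g) m u) *
          ((q ^ (r + s - ν - u) - 1) / (q - 1))
        = gaussR q ν l * q ^ ((ν + 1 - l) * (r - l)) *
            qmulCoeff q (s - (ν + 1 - l)) (qdIter q r l f) (qdIter q s (ν + 1 - l) g) m u
          + gaussR q ν l * q ^ ((ν - l) * (r - l)) *
            qmulCoeff q (s - (ν - l)) (qdIter q r (l+1) f) (qdIter q s (ν - l) g) m u := by
      intro l hl
      rw [Finset.mem_range] at hl
      have hlν : l ≤ ν := by omega
      by_cases hlr : r < l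
      · have Z1 : ∀ m i, qdIter q r l f m i = 0 := iter_zero_of_lt q r f hf hlr
        have Z2 : ∀ m i, qdIter q r (l+1) f m i = 0 := iter_zero_of_lt q r f hf (by omega)
        rw [qmul_zero_left q (s - (ν - l)) _ _ Z1 m u,
            qmul_zero_left q (s - (ν + 1 - l)) _ _ Z1 m u,
            qmul_zero_left q (s - (ν - l)) _ _ Z2 m u]
        ring
      by_cases hgs : s < ν - l
      · have Z1 : ∀ m i, qdIter q s (ν - l) g m i = 0 := iter_zero_of_lt q s g hg hgs
        have Z2 : ∀ m i, qdIter q s (ν + 1 - l) g m i = 0 :=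
          iter_zero_of_lt q s g hg (by omega)
        rw [qmul_zero_right q (s - (ν - l)) _ _ Z1 m u,
            qmul_zero_right q (s - (ν + 1 - l)) _ _ Z2 m u,
            qmul_zero_right q (s - (ν - l)) _ _ Z1 m u]
        ring
      push_neg at hlr hgs
      have PR := prodRule q hq (r - l) (s - (ν - l)) (qdIter q r l f) (qdIter q s (ν - l) g)
        (vanish_iter q l r f hf) (vanish_iter q (ν - l) s g hg) m u
      have e0 : (r - l) + (s - (ν - l)) - u = r + s - ν - u := by omega
      rw [e0, ← qdIter_peel q (ν - l) s g, ← qdIter_peel q l r f] at PR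
      have e1 : s - (ν - l) - 1 = s - (ν + 1 - l) := by omega
      have e2 : ν - l + 1 = ν + 1 - l := by omega
      rw [e1, e2] at PR
      have e3 : (ν + 1 - l) * (r - l) = (ν - l) * (r - l) + (r - l) := by
        have h4 : ν + 1 - l = (ν - l) + 1 := by omega
        rw [h4]; ring
      rw [e3, pow_add]
      linear_combination (gaussR q ν l * q ^ ((ν - l) * (r - l))) * PR
    calc (∑ l ∈ Finset.range (ν+1),
            (gaussR q ν l * q ^ ((ν - l) * (r - l)) *
              qmulCoeff q (s - (ν - l)) (qdIter q r l f) (qdIter q s (ν - l) g) m u) *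
              ((q ^ (r + s - ν - u) - 1) / (q - 1)))
        = ∑ l ∈ Finset.range (ν+1),
            (gaussR q ν l * q ^ ((ν + 1 - l) * (r - l)) *
              qmulCoeff q (s - (ν + 1 - l)) (qdIter q r l f) (qdIter q s (ν + 1 - l) g) m u
            + gaussR q ν l * q ^ ((ν - l) * (r - l)) *
              qmulCoeff q (s - (ν - l)) (qdIter q r (l+1) f) (qdIter q s (ν - l) g) m u) :=
          Finset.sum_congr rfl key
      _ = (∑ l ∈ Finset.range (ν+1),
            gaussR q ν l * q ^ ((ν + 1 - l) * (r - l)) *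
              qmulCoeff q (s - (ν + 1 - l)) (qdIter q r l f) (qdIter q s (ν + 1 - l) g) m u)
          + ∑ l ∈ Finset.range (ν+1),
            gaussR q ν l * q ^ ((ν - l) * (r - l)) *
              qmulCoeff q (s - (ν - l)) (qdIter q r (l+1) f) (qdIter q s (ν - l) g) m u :=
          Finset.sum_add_distrib
      _ = ∑ l ∈ Finset.range (ν + 1 + 1),
            gaussR q (ν+1) l * q ^ ((ν + 1 - l) * (r - l)) *
              qmulCoeff q (s - (ν + 1 - l)) (qdIter q r l f) (qdIter q s (ν + 1 - l) g) m u := by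
          rw [Finset.sum_range_succ']
          have pas : ∀ l ∈ Finset.range (ν+1),
              gaussR q (ν+1) (l+1) * q ^ ((ν + 1 - (l+1)) * (r - (l+1))) *
                qmulCoeff q (s - (ν + 1 - (l+1))) (qdIter q r (l+1) f)
                  (qdIter q s (ν + 1 - (l+1)) g) m u
              = gaussR q ν (l+1) * q ^ ((ν + 1 - (l+1)) * (r - (l+1))) *
                qmulCoeff q (s - (ν + 1 - (l+1))) (qdIter q r (l+1) f)
                  (qdIter q s (ν + 1 - (l+1)) g) m u
              + gaussR q ν l * q ^ ((ν - l) * (r - l)) *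
                qmulCoeff q (s - (ν - l)) (qdIter q r (l+1) f) (qdIter q s (ν - l) g) m u := by
            intro l hl
            rw [Finset.mem_range] at hl
            have hv : ν + 1 - (l+1) = ν - l := by omega
            rw [hv, gauss_pascal q hq ν l (by omega)]
            by_cases hlr : l < r
            · have e : (ν - l) * (r - l) = (ν - l) * (r - (l+1)) + (ν - l) := by
                have h1 : r - l = (r - (l+1)) + 1 := by omega
                rw [h1]; ring
              rw [e, pow_add]
              ring
            · have Z : ∀ m i, qdIter q r (l+1) f m i = 0 :=
                iter_zero_of_lt q r f hf (by omega)
              rw [qmul_zero_left q (s - (ν - l)) _ _ Z m u]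
              ring
          conv_rhs => rw [Finset.sum_range_succ']
          rw [Finset.sum_congr rfl pas, Finset.sum_add_distrib]
          rw [Finset.sum_range_succ (fun l => gaussR q ν (l+1) * q ^ ((ν + 1 - (l+1)) * (r - (l+1))) *
              qmulCoeff q (s - (ν + 1 - (l+1))) (qdIter q r (l+1) f) (qdIter q s (ν + 1 - (l+1)) g) m u) ν]
          rw [gauss_eq_zero_of_lt q (by omega : ν < ν + 1), gauss_zero, gauss_zero]
          ring

/-- Leibniz rule for the `q`-product: for homogeneous polynomials `f` of
degree `r` and `g` of degree `s` and every `ν ≥ 1`,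
`(f*g)^{(ν)} = Σ_{l=0}^ν [ν,l]_q q^{(ν-l)(r-l)} (f^{(l)}) * (g^{(ν-l)})`. -/
theorem qLeibniz (q : ℕ) (hq : 2 ≤ q) (r s : ℕ) (f g : ℤ → ℕ → ℝ)
    (hf : ∀ m i, r < i → f m i = 0) (hg : ∀ m j, s < j → g m j = 0)
    (ν : ℕ) (hν : 1 ≤ ν) (m : ℤ) (u : ℕ) :
    qdIter (q : ℝ) (r + s) ν (qmulCoeff (q : ℝ) s f g) m u =
      ∑ l ∈ Finset.range (ν + 1),
        gaussR (q : ℝ) ν l * (q : ℝ) ^ ((ν - l) * (r - l)) *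
          qmulCoeff (q : ℝ) (s - (ν - l)) (qdIter (q : ℝ) r l f)
            (qdIter (q : ℝ) s (ν - l) g) m u := by
  have hq1 : (1:ℝ) < (q:ℝ) := by exact_mod_cast (by omega : 1 < q)
  exact qLeibnizAux (q:ℝ) hq1 r s f g hf hg ν m u
end
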